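/- Let M be a maximal ideal of a domain D and R a ring of functions from E to D such that every f ∈ R takes values in only finitely many residue classes mod M. Then for every ideal I of R, the set Z_M(I) = {f^{-1}(M) : f ∈ I} is closed under finite intersections: for all f, g ∈ I there exists h ∈ I with h^{-1}(M) = f^{-1}(M) ∩ g^{-1}(M). -/

import Mathlib

theorem stmt8 {D : Type*} [CommRing D] [IsDomain D] {E : Set D}
    (R : Subring (↥E → D)) (hconst : ∀ d : D, (fun _ : ↥E => d) ∈ R)
    (M : Ideal D) (hM : M.IsMaximal)
    (hfin : ∀ f : R,
      (Set.range fun e : ↥E => Ideal.Quotient.mk M ((f : ↥E → D) e)).Finite) :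
    ∀ I : Ideal R, ∀ f ∈ I, ∀ g ∈ I, ∃ h ∈ I,
      {e : ↥E | (h : ↥E → D) e ∈ M} =
        {e : ↥E | (f : ↥E → D) e ∈ M} ∩ {e : ↥E | (g : ↥E → D) e ∈ M} := by
  classical
  intro I f hf g hg
  haveI := hM
  letI : Field (D ⧸ M) := Ideal.Quotient.field M
  set q := Ideal.Quotient.mk M with hqdef
  -- nonzero residue classes of f
  set A : Finset (D ⧸ M) := (hfin f).toFinset.erase 0 with hAdef
  -- lifts of residue classes
  have hsurj := Ideal.Quotient.mk_surjective (I := M)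
  choose lift hlift using hsurj
  -- the element S = ∏ (lift a - f)
  set S : R := ∏ a ∈ A, (⟨fun _ : ↥E => lift a, hconst _⟩ - f) with hSdef
  have hSval : ∀ e : ↥E, (S : ↥E → D) e = ∏ a ∈ A, (lift a - (f : ↥E → D) e) := by
    intro e
    rw [hSdef]
    rw [show ((∏ a ∈ A, (⟨fun _ : ↥E => lift a, hconst _⟩ - f) : R) : ↥E → D)
      = ∏ a ∈ A, ((fun _ : ↥E => lift a) - (f : ↥E → D)) by push_cast; rfl]
    simp
  set c : D ⧸ M := ∏ a ∈ A, a with hcdef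
  have hc : c ≠ 0 := by
    rw [hcdef]
    exact Finset.prod_ne_zero_iff.2 fun a ha => Finset.ne_of_mem_erase ha
  obtain ⟨d, hd⟩ := Ideal.Quotient.mk_surjective (I := M) c⁻¹
  -- key residue computation for S
  have hqS : ∀ e : ↥E, q ((S : ↥E → D) e)
      = ∏ a ∈ A, (a - q ((f : ↥E → D) e)) := by
    intro e
    rw [hSval, map_prod]
    exact Finset.prod_congr rfl fun a _ => by rw [map_sub, hlift]
  have key : ∀ e : ↥E, q ((S : ↥E → D) e) * q d
      = if q ((f : ↥E → D) e) = 0 then 1 else 0 := by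
    intro e
    by_cases hfe : q ((f : ↥E → D) e) = 0
    · rw [if_pos hfe, hqS, hfe]
      simp only [sub_zero]
      rw [hd, ← hcdef, mul_inv_cancel₀ hc]
    · rw [if_neg hfe, hqS]
      have hmem : q ((f : ↥E → D) e) ∈ A := by
        rw [hAdef]
        exact Finset.mem_erase.2 ⟨hfe, (hfin f).mem_toFinset.2 ⟨e, rfl⟩⟩
      rw [Finset.prod_eq_zero hmem (by rw [sub_self]), zero_mul]
  -- the element h
  refine ⟨f + g * ((⟨fun _ : ↥E => d, hconst d⟩ : R) * S),
    I.add_mem hf (I.mul_mem_right _ hg), ?_⟩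
  ext e
  simp only [Set.mem_setOf_eq, Set.mem_inter_iff]
  rw [← Ideal.Quotient.eq_zero_iff_mem, ← Ideal.Quotient.eq_zero_iff_mem,
    ← Ideal.Quotient.eq_zero_iff_mem]
  have hval : ((f + g * ((⟨fun _ : ↥E => d, hconst d⟩ : R) * S) : R) : ↥E → D) e
      = (f : ↥E → D) e + (g : ↥E → D) e * (d * (S : ↥E → D) e) := by
    push_cast
    rfl
  rw [hval]
  have : q ((f : ↥E → D) e + (g : ↥E → D) e * (d * (S : ↥E → D) e))
      = q ((f : ↥E → D) e) + q ((g : ↥E → D) e) *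
        (q ((S : ↥E → D) e) * q d) := by
    rw [map_add, map_mul, map_mul]; ring
  rw [this, key e]
  by_cases hfe : q ((f : ↥E → D) e) = 0
  · rw [if_pos hfe, hfe, mul_one, zero_add]
    simp [hfe]
    exact Iff.rfl
  · rw [if_neg hfe, mul_zero, add_zero]
    simp [hfe]
    exact fun h => absurd h hfe
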